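/- For r > 0, τ_i > 0, and b ∈ ℝ, with a = r²/4 and c = a/τ_i = r²/(4τ_i), ∫_α^{α+τ_i} e^{−r²/(4(α+τ_i−τ))} (b + α + τ_i − τ)²/(α+τ_i−τ)² dτ = (τ_i + b²/a) e^{−c} − E₁(c)(a − 2b). -/

import Mathlib

open Real MeasureTheory Set Filter Topology intervalIntegral

/-- The exponential integral `E₁(x) = ∫_x^∞ e^{-t}/t dt`. -/
noncomputable def E1 (x : ℝ) : ℝ := ∫ t in Set.Ioi x, Real.exp (-t) / t

lemma meas_expt : Measurable fun t : ℝ => Real.exp (-t) / t :=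
  (Real.measurable_exp.comp measurable_neg).div measurable_id

lemma integrableOn_expt {x : ℝ} (hx : 0 < x) :
    IntegrableOn (fun t => Real.exp (-t) / t) (Set.Ioi x) := by
  have h1 : IntegrableOn (fun t : ℝ => Real.exp (-(1 : ℝ) * t)) (Set.Ioi x) :=
    exp_neg_integrableOn_Ioi x one_pos
  simp only [neg_one_mul] at h1
  refine Integrable.mono' (h1.div_const x) meas_expt.aestronglyMeasurable ?_
  filter_upwards [ae_restrict_mem measurableSet_Ioi] with t ht
  have htx : x < t := ht
  rw [Real.norm_eq_abs, abs_div, abs_of_pos (exp_pos _), abs_of_pos (hx.trans htx)]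
  exact div_le_div_of_nonneg_left (exp_pos _).le hx htx.le

lemma E1_nonneg {x : ℝ} (hx : 0 < x) : 0 ≤ E1 x := by
  refine setIntegral_nonneg measurableSet_Ioi fun t ht => ?_
  exact div_nonneg (exp_pos _).le (hx.trans ht).le

lemma E1_le {x : ℝ} (hx : 0 < x) : E1 x ≤ Real.exp (-x) / x := by
  have h1 : IntegrableOn (fun t : ℝ => Real.exp (-(1 : ℝ) * t)) (Set.Ioi x) :=
    exp_neg_integrableOn_Ioi x one_pos
  simp only [neg_one_mul] at h1
  have : E1 x ≤ ∫ t in Set.Ioi x, Real.exp (-t) / x := by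
    refine setIntegral_mono_on (integrableOn_expt hx) (h1.div_const x)
      measurableSet_Ioi fun t ht => ?_
    exact div_le_div_of_nonneg_left (exp_pos _).le hx (le_of_lt ht)
  calc E1 x ≤ ∫ t in Set.Ioi x, Real.exp (-t) / x := this
    _ = (∫ t in Set.Ioi x, Real.exp (-t)) / x := by rw [MeasureTheory.integral_div]
    _ = Real.exp (-x) / x := by rw [integral_exp_neg_Ioi]

lemma E1_sub {x y : ℝ} (hx : 0 < x) (hy : 0 < y) :
    E1 y = E1 x - ∫ t in x..y, Real.exp (-t) / t := by
  have key : ∀ u v : ℝ, 0 < u → u ≤ v →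
      E1 u = (∫ t in Set.Ioc u v, Real.exp (-t) / t) + E1 v := by
    intro u v hu huv
    rw [E1, ← Ioc_union_Ioi_eq_Ioi huv,
      setIntegral_union (by simp [Set.disjoint_left]) measurableSet_Ioi
        (((integrableOn_expt hu)).mono_set Ioc_subset_Ioi_self)
        (integrableOn_expt (hu.trans_le huv))]
    rfl
  rcases le_total x y with h | h
  · rw [intervalIntegral.integral_of_le h]
    have := key x y hx h; linarith
  · rw [intervalIntegral.integral_of_ge h]
    have := key y x hy h; linarith

lemma hasDerivAt_E1 {x : ℝ} (hx : 0 < x) :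
    HasDerivAt E1 (-(Real.exp (-x) / x)) x := by
  have hx2 : 0 < x / 2 := by linarith
  have heq : ∀ᶠ y in 𝓝 x, E1 y = E1 (x/2) - ∫ t in (x/2)..y, Real.exp (-t) / t := by
    filter_upwards [eventually_gt_nhds (by linarith : x / 2 < x)] with y hy
    exact E1_sub hx2 (by linarith)
  have hInt : IntervalIntegrable (fun t => Real.exp (-t) / t) volume (x/2) x := by
    apply IntegrableOn.intervalIntegrable
    rw [uIcc_of_le (by linarith)]
    exact (integrableOn_expt (by linarith : (0:ℝ) < x / 4)).mono_set
      (fun t ht => lt_of_lt_of_le (by linarith) ht.1)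
  have hder : HasDerivAt (fun y => ∫ t in (x/2)..y, Real.exp (-t) / t)
      (Real.exp (-x) / x) x := by
    refine intervalIntegral.integral_hasDerivAt_right hInt
      (meas_expt.stronglyMeasurable.stronglyMeasurableAtFilter) ?_
    exact ((Real.continuous_exp.comp continuous_neg).continuousAt).div continuousAt_id hx.ne'
  have h2 : HasDerivAt (fun y => E1 (x/2) - ∫ t in (x/2)..y, Real.exp (-t) / t)
      (-(Real.exp (-x) / x)) x := hder.const_sub _
  exact h2.congr_of_eventuallyEq heq

lemma exp_neg_le_aux {u : ℝ} (hu : 0 < u) : Real.exp (-u) ≤ 4 / u ^ 2 := by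
  have h2 : u / 2 ≤ Real.exp (u / 2) := by linarith [Real.add_one_le_exp (u / 2)]
  have h3 : (u / 2) ^ 2 ≤ Real.exp (u / 2) ^ 2 := pow_le_pow_left₀ (by positivity) h2 2
  have h4 : u ^ 2 / 4 ≤ Real.exp u := by
    calc u ^ 2 / 4 = (u / 2) ^ 2 := by ring
      _ ≤ Real.exp (u / 2) ^ 2 := h3
      _ = Real.exp (u / 2 + u / 2) := by rw [Real.exp_add]; ring
      _ = Real.exp u := by ring_nf
  rw [Real.exp_neg]
  calc (Real.exp u)⁻¹ ≤ (u ^ 2 / 4)⁻¹ :=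
        inv_anti₀ (by positivity) h4
    _ = 4 / u ^ 2 := by rw [inv_div]

/-- the `j = 2` product-integration moment of the 2D heat kernel,
with `a = r²/4` and `c = r²/(4τᵢ)`. -/
theorem heat_moment_j2 (r τi α b : ℝ) (hr : 0 < r) (hτ : 0 < τi) :
    ∫ τ in α..(α + τi),
        Real.exp (-r ^ 2 / (4 * (α + τi - τ))) * (b + (α + τi - τ)) ^ 2 / (α + τi - τ) ^ 2 =
      (τi + b ^ 2 / (r ^ 2 / 4)) * Real.exp (-(r ^ 2 / (4 * τi))) -
        E1 (r ^ 2 / (4 * τi)) * (r ^ 2 / 4 - 2 * b) := by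
  set a : ℝ := r ^ 2 / 4 with ha_def
  have ha : 0 < a := by positivity
  set f : ℝ → ℝ := fun σ => Real.exp (-r ^ 2 / (4 * σ)) * (b + σ) ^ 2 / σ ^ 2 with hf_def
  have hchg : (∫ τ in α..(α + τi),
      Real.exp (-r ^ 2 / (4 * (α + τi - τ))) * (b + (α + τi - τ)) ^ 2 / (α + τi - τ) ^ 2)
      = ∫ σ in (0:ℝ)..τi, f σ := by
    have h := intervalIntegral.integral_comp_sub_left f (α + τi) (a := α) (b := α + τi)
    simp only [hf_def, add_sub_cancel_left, sub_self] at h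
    exact h
  rw [hchg]
  have harg : ∀ σ : ℝ, -r ^ 2 / (4 * σ) = -(a / σ) := by
    intro σ; rw [ha_def, div_div, neg_div]
  set F : ℝ → ℝ := fun σ => σ * Real.exp (-(a / σ)) + (2 * b - a) * E1 (a / σ)
      + b ^ 2 / a * Real.exp (-(a / σ)) with hF_def
  -- derivative of F at every σ > 0
  have hderiv : ∀ σ : ℝ, 0 < σ → HasDerivAt F (f σ) σ := by
    intro σ hσ
    have h1 : HasDerivAt (fun σ : ℝ => a / σ) (-(a / σ ^ 2)) σ := by
      have h1' := (hasDerivAt_inv hσ.ne').const_mul a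
      simp only [div_eq_mul_inv, mul_neg] at h1' ⊢
      exact h1'
    have hexp : HasDerivAt (fun σ : ℝ => Real.exp (-(a / σ)))
        (Real.exp (-(a / σ)) * (a / σ ^ 2)) σ := by
      have h := (h1.neg).exp
      convert h using 1 <;> simp only [Pi.neg_apply, neg_neg]
    have hE : HasDerivAt (fun σ : ℝ => E1 (a / σ)) (Real.exp (-(a / σ)) / σ) σ := by
      have h := (hasDerivAt_E1 (div_pos ha hσ)).comp σ h1
      refine h.congr_deriv ?_
      field_simp
    have hmul : HasDerivAt (fun σ : ℝ => σ * Real.exp (-(a / σ)))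
        (1 * Real.exp (-(a / σ)) + σ * (Real.exp (-(a / σ)) * (a / σ ^ 2))) σ :=
      (hasDerivAt_id σ).mul hexp
    have htot := (hmul.add (hE.const_mul (2 * b - a))).add (hexp.const_mul (b ^ 2 / a))
    refine htot.congr_deriv ?_
    rw [hf_def]
    simp only [harg σ]
    field_simp
    ring
  -- norm bound for f on (0, τi]
  have hbound : ∀ σ : ℝ, 0 < σ → σ ≤ τi → ‖f σ‖ ≤ 4 / a ^ 2 * (|b| + τi) ^ 2 := by
    intro σ hσ0 hστ
    have hfσ : f σ = Real.exp (-(a / σ)) * (b + σ) ^ 2 / σ ^ 2 := by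
      rw [hf_def]; simp only [harg σ]
    rw [hfσ, Real.norm_eq_abs, abs_of_nonneg (by positivity)]
    have hb2 : (b + σ) ^ 2 ≤ (|b| + τi) ^ 2 := by
      rw [← sq_abs (b + σ)]
      apply pow_le_pow_left₀ (abs_nonneg _)
      calc |b + σ| ≤ |b| + |σ| := abs_add_le _ _
        _ = |b| + σ := by rw [abs_of_pos hσ0]
        _ ≤ |b| + τi := by linarith
    have hexp_le : Real.exp (-(a / σ)) ≤ 4 / (a / σ) ^ 2 :=
      exp_neg_le_aux (div_pos ha hσ0)
    calc Real.exp (-(a / σ)) * (b + σ) ^ 2 / σ ^ 2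
        ≤ 4 / (a / σ) ^ 2 * (|b| + τi) ^ 2 / σ ^ 2 := by
          apply div_le_div_of_nonneg_right ?_ (by positivity)
          exact mul_le_mul hexp_le hb2 (by positivity) (by positivity)
      _ = 4 / a ^ 2 * (|b| + τi) ^ 2 := by
          field_simp
  -- interval integrability of f
  have hint : IntervalIntegrable f volume 0 τi := by
    rw [intervalIntegrable_iff_integrableOn_Ioc_of_le hτ.le]
    have hmeas : Measurable f := by
      rw [hf_def]
      exact (((Real.measurable_exp.comp (measurable_const.div
        (measurable_id.const_mul 4))).mul ((measurable_const.add measurable_id).pow_const 2)).div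
        (measurable_id.pow_const 2))
    refine Integrable.mono' (g := fun _ => 4 / a ^ 2 * (|b| + τi) ^ 2)
      (integrableOn_const measure_Ioc_lt_top.ne)
      hmeas.aestronglyMeasurable ?_
    filter_upwards [ae_restrict_mem measurableSet_Ioc] with σ hσ
    exact hbound σ hσ.1 hσ.2
  -- limit of F at 0⁺
  have h0 : Filter.Tendsto F (𝓝[>] (0:ℝ)) (𝓝 0) := by
    set G : ℝ → ℝ := fun σ => (σ + |2 * b - a| * (σ / a) + b ^ 2 / a) * Real.exp (-(a / σ))
      with hG_def
    have hGlim : Filter.Tendsto G (𝓝[>] (0:ℝ)) (𝓝 0) := by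
      have hinv : Filter.Tendsto (fun σ : ℝ => a / σ) (𝓝[>] (0:ℝ)) atTop := by
        simp only [div_eq_mul_inv]
        exact Filter.Tendsto.const_mul_atTop ha tendsto_inv_nhdsGT_zero
      have hexp0 : Filter.Tendsto (fun σ : ℝ => Real.exp (-(a / σ))) (𝓝[>] (0:ℝ)) (𝓝 0) :=
        (Real.tendsto_exp_neg_atTop_nhds_zero).comp hinv
      have hP : Filter.Tendsto (fun σ : ℝ => σ + |2 * b - a| * (σ / a) + b ^ 2 / a)
          (𝓝[>] (0:ℝ)) (𝓝 (0 + |2 * b - a| * (0 / a) + b ^ 2 / a)) := by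
        apply Filter.Tendsto.mono_left ?_ nhdsWithin_le_nhds
        exact Continuous.tendsto (by continuity) 0
      have := hP.mul hexp0
      simpa using this
    refine squeeze_zero_norm' ?_ hGlim
    filter_upwards [self_mem_nhdsWithin] with σ hσ
    have hσ0 : (0:ℝ) < σ := hσ
    have haσ : 0 < a / σ := div_pos ha hσ0
    have hE1a : E1 (a / σ) ≤ Real.exp (-(a / σ)) * (σ / a) := by
      have := E1_le haσ
      calc E1 (a / σ) ≤ Real.exp (-(a / σ)) / (a / σ) := this
        _ = Real.exp (-(a / σ)) * (σ / a) := by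
            rw [div_div_eq_mul_div, div_div]; ring_nf
    have hE1b : 0 ≤ E1 (a / σ) := E1_nonneg haσ
    have hep : 0 < Real.exp (-(a / σ)) := Real.exp_pos _
    calc ‖F σ‖ ≤ ‖σ * Real.exp (-(a / σ))‖ + ‖(2 * b - a) * E1 (a / σ)‖
          + ‖b ^ 2 / a * Real.exp (-(a / σ))‖ := norm_add₃_le
      _ ≤ G σ := by
          rw [hG_def]
          simp only [Real.norm_eq_abs, abs_mul]
          rw [abs_of_pos hσ0, abs_of_pos hep, abs_of_nonneg hE1b,
            abs_of_nonneg (by positivity : (0:ℝ) ≤ b ^ 2 / a)]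
          have h2 : |2 * b - a| * E1 (a / σ) ≤ |2 * b - a| * (Real.exp (-(a / σ)) * (σ / a)) :=
            mul_le_mul_of_nonneg_left hE1a (abs_nonneg _)
          nlinarith [abs_nonneg (2 * b - a)]
  -- limit of F at τi⁻
  have hτi : Filter.Tendsto F (𝓝[<] τi) (𝓝 (F τi)) :=
    ((hderiv τi hτ).continuousAt.tendsto).mono_left nhdsWithin_le_nhds
  rw [intervalIntegral.integral_eq_sub_of_hasDerivAt_of_tendsto hτ
    (fun σ hσ => hderiv σ hσ.1) hint h0 hτi]
  have hc : a / τi = r ^ 2 / (4 * τi) := by rw [ha_def, div_div]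
  rw [hF_def]
  simp only [hc]
  ring
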